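/- For N > 0 and D_m > 0, the normalized hybrid NOMA energy g(T_n) = D_m·e^(N/D_m)·(e^(y1(T_n)) − 1) + T_n·(e^(y2(T_n)) − 1), where y1(T_n) = N(D_m − T_n)/(D_m(D_m + T_n)) and y2(T_n) = y1(T_n) + N/D_m, is monotonically non-increasing in T_n on [0, ∞). -/

import Mathlib

private lemma hasDeriv_aux (N Dm : ℝ) (hN : 0 < N) (hD : 0 < Dm) (x : ℝ) (hx : 0 < x) :
    HasDerivAt (fun Tn : ℝ =>
      Dm * Real.exp (N / Dm) * (Real.exp (N * (Dm - Tn) / (Dm * (Dm + Tn))) - 1) +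
        Tn * (Real.exp (N * (Dm - Tn) / (Dm * (Dm + Tn)) + N / Dm) - 1))
      (Real.exp (2 * N / (Dm + x)) * (1 - 2 * N / (Dm + x)) - 1) x := by
  have hs : 0 < Dm + x := by linarith
  have hden : Dm * (Dm + x) ≠ 0 := by positivity
  -- derivative of y1
  have hy1 : HasDerivAt (fun Tn : ℝ => N * (Dm - Tn) / (Dm * (Dm + Tn)))
      ((-N * (Dm * (Dm + x)) - N * (Dm - x) * Dm) / (Dm * (Dm + x)) ^ 2) x := by
    have hu : HasDerivAt (fun Tn : ℝ => N * (Dm - Tn)) (-N) x := by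
      have := ((hasDerivAt_const x Dm).sub (hasDerivAt_id x)).const_mul N
      simpa using this
    have hv : HasDerivAt (fun Tn : ℝ => Dm * (Dm + Tn)) Dm x := by
      have := ((hasDerivAt_const x Dm).add (hasDerivAt_id x)).const_mul Dm
      simpa using this
    exact hu.div hv hden
  set d : ℝ := (-N * (Dm * (Dm + x)) - N * (Dm - x) * Dm) / (Dm * (Dm + x)) ^ 2 with hdv
  have hd_eq : d = -2 * N / (Dm + x) ^ 2 := by
    rw [hdv]; field_simp; ring
  have he1 : HasDerivAt (fun Tn : ℝ => Real.exp (N * (Dm - Tn) / (Dm * (Dm + Tn))))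
      (Real.exp (N * (Dm - x) / (Dm * (Dm + x))) * d) x := hy1.exp
  have he2 : HasDerivAt (fun Tn : ℝ => Real.exp (N * (Dm - Tn) / (Dm * (Dm + Tn)) + N / Dm))
      (Real.exp (N * (Dm - x) / (Dm * (Dm + x)) + N / Dm) * d) x :=
    (hy1.add_const (N / Dm)).exp
  have hterm1 : HasDerivAt (fun Tn : ℝ =>
      Dm * Real.exp (N / Dm) * (Real.exp (N * (Dm - Tn) / (Dm * (Dm + Tn))) - 1))
      (Dm * Real.exp (N / Dm) * (Real.exp (N * (Dm - x) / (Dm * (Dm + x))) * d)) x := by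
    simpa using (he1.sub_const 1).const_mul (Dm * Real.exp (N / Dm))
  have hterm2 : HasDerivAt (fun Tn : ℝ =>
      Tn * (Real.exp (N * (Dm - Tn) / (Dm * (Dm + Tn)) + N / Dm) - 1))
      (1 * (Real.exp (N * (Dm - x) / (Dm * (Dm + x)) + N / Dm) - 1)
        + x * (Real.exp (N * (Dm - x) / (Dm * (Dm + x)) + N / Dm) * d)) x :=
    (hasDerivAt_id x).mul (he2.sub_const 1)
  have htot := hterm1.add hterm2
  refine htot.congr_deriv ?_
  -- equality of derivative values
  have hkey : N * (Dm - x) / (Dm * (Dm + x)) + N / Dm = 2 * N / (Dm + x) := by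
    field_simp; ring
  have hexp : Real.exp (N / Dm) * Real.exp (N * (Dm - x) / (Dm * (Dm + x)))
      = Real.exp (2 * N / (Dm + x)) := by
    rw [← Real.exp_add, ← hkey]; ring_nf
  rw [hd_eq, ← hkey]
  rw [Real.exp_add]
  have hsne : (Dm + x) ≠ 0 := ne_of_gt hs
  field_simp
  ring

theorem stmt_5 (N Dm : ℝ) (hN : 0 < N) (hD : 0 < Dm) :
    AntitoneOn (fun Tn : ℝ =>
      Dm * Real.exp (N / Dm) * (Real.exp (N * (Dm - Tn) / (Dm * (Dm + Tn))) - 1) +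
        Tn * (Real.exp (N * (Dm - Tn) / (Dm * (Dm + Tn)) + N / Dm) - 1))
      (Set.Ici 0) := by
  have hint : interior (Set.Ici (0:ℝ)) = Set.Ioi 0 := interior_Ici
  apply antitoneOn_of_deriv_nonpos (convex_Ici 0)
  · -- continuity
    apply ContinuousOn.add
    · apply ContinuousOn.mul continuousOn_const
      apply ContinuousOn.sub _ continuousOn_const
      apply ContinuousOn.rexp
      apply ContinuousOn.div (by fun_prop) (by fun_prop)
      intro x hx
      have : (0:ℝ) ≤ x := hx
      positivity
    · apply ContinuousOn.mul continuousOn_id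
      apply ContinuousOn.sub _ continuousOn_const
      apply ContinuousOn.rexp
      apply ContinuousOn.add _ continuousOn_const
      apply ContinuousOn.div (by fun_prop) (by fun_prop)
      intro x hx
      have : (0:ℝ) ≤ x := hx
      positivity
  · intro x hx
    rw [hint] at hx
    exact ((hasDeriv_aux N Dm hN hD x hx).differentiableAt).differentiableWithinAt
  · intro x hx
    rw [hint] at hx
    rw [(hasDeriv_aux N Dm hN hD x hx).deriv]
    have hs : 0 < Dm + x := by have := hx.out; linarith
    set u : ℝ := 2 * N / (Dm + x) with hu
    have hle : 1 - u ≤ Real.exp (-u) := by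
      have := Real.add_one_le_exp (-u)
      linarith
    have hpos : 0 < Real.exp u := Real.exp_pos u
    have : Real.exp u * (1 - u) ≤ Real.exp u * Real.exp (-u) :=
      mul_le_mul_of_nonneg_left hle hpos.le
    rw [← Real.exp_add] at this
    simp at this
    linarith
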